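/- For every k ≥ 1, the set T_k = {x ∈ ℕ : for every prime p ≤ k, the p-adic valuation of x is divisible by ⌊log_p k⌋ + 1} is k-multiplicative Sidon. -/

import Mathlib

/-- A set `S` of positive integers is `k`-multiplicative Sidon. -/
def MultSidon (k : ℕ) (S : Set ℕ) : Prop :=
  ∀ x ∈ S, ∀ y ∈ S, ∀ a b : ℕ, 1 ≤ a → a ≤ k → 1 ≤ b → b ≤ k → a * x = b * y → a = b ∧ x = y

theorem stmt3 (k : ℕ) (hk : 1 ≤ k) :
    MultSidon k {x : ℕ | 0 < x ∧
      ∀ p : ℕ, p.Prime → p ≤ k → (Nat.log p k + 1) ∣ x.factorization p} := by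
  intro x hx y hy a b ha1 hak hb1 hbk hab
  obtain ⟨hx0, hxd⟩ := hx
  obtain ⟨hy0, hyd⟩ := hy
  have ha0 : a ≠ 0 := by omega
  have hb0 : b ≠ 0 := by omega
  have key : ∀ p : ℕ, p.Prime →
      a.factorization p = b.factorization p ∧ x.factorization p = y.factorization p := by
    intro p hp
    have hfact : a.factorization p + x.factorization p
        = b.factorization p + y.factorization p := by
      have h := congrArg (fun n => Nat.factorization n p) hab
      simpa [Nat.factorization_mul ha0 hx0.ne', Nat.factorization_mul hb0 hy0.ne'] using h
    by_cases hpk : p ≤ k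
    · set L := Nat.log p k with hL
      have hva : a.factorization p ≤ L :=
        (Nat.le_log_iff_pow_le hp.one_lt (by omega)).mpr
          (le_trans (Nat.ordProj_le p ha0) hak)
      have hvb : b.factorization p ≤ L :=
        (Nat.le_log_iff_pow_le hp.one_lt (by omega)).mpr
          (le_trans (Nat.ordProj_le p hb0) hbk)
      obtain ⟨m, hm⟩ := hxd p hp hpk
      obtain ⟨n, hn⟩ := hyd p hp hpk
      have hmod : a.factorization p % (L + 1) = b.factorization p % (L + 1) := by
        have h2 : (a.factorization p + (L + 1) * m) % (L + 1)
            = (b.factorization p + (L + 1) * n) % (L + 1) := by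
          rw [← hm, ← hn, hfact]
        simpa [Nat.add_mul_mod_self_left] using h2
      rw [Nat.mod_eq_of_lt (by omega), Nat.mod_eq_of_lt (by omega)] at hmod
      exact ⟨hmod, by omega⟩
    · have hva : a.factorization p = 0 := Nat.factorization_eq_zero_of_lt (by omega)
      have hvb : b.factorization p = 0 := Nat.factorization_eq_zero_of_lt (by omega)
      exact ⟨by omega, by omega⟩
  constructor
  · exact Nat.eq_of_factorization_eq ha0 hb0 fun p => by
      by_cases hp : p.Prime
      · exact (key p hp).1
      · simp [Nat.factorization_eq_zero_of_not_prime _ hp]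
  · exact Nat.eq_of_factorization_eq hx0.ne' hy0.ne' fun p => by
      by_cases hp : p.Prime
      · exact (key p hp).2
      · simp [Nat.factorization_eq_zero_of_not_prime _ hp]
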